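/- Let p ∈ (0,∞) and (M,d,+) be a complete metric semigroup. Then the bivariate Wiener bounded p-variation space (WBV_p(I×I,M), ρ_p), with ρ_p(f,g) = d(f(0,0),g(0,0)) + V_p(f,g), is a complete metric space. -/

import Mathlib

open Finset

/-- `t` represents a partition `0 = t 0 < t 1 < ⋯ < t n = 1` of `[0,1]`. -/
def IsPartition (n : ℕ) (t : ℕ → ℝ) : Prop :=
  0 < n ∧ t 0 = 0 ∧ t n = 1 ∧ ∀ i < n, t i < t (i + 1)

/-- `normW p x = x ^ (1/p)` when `p ≥ 1`, and `x` itself when `p < 1`,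
matching the two cases in the definition of the Wiener `p`-variation. -/
noncomputable def normW (p x : ℝ) : ℝ := if 1 ≤ p then x ^ (1 / p) else x

variable {M : Type*} [MetricSpace M] [AddCommSemigroup M]

/-- Marginal partition sum `Σ_i d^p(f(t_i,0), f(t_{i-1},0))`. -/
noncomputable def wSum1 (p : ℝ) (f : ℝ → ℝ → M) (n : ℕ) (t : ℕ → ℝ) : ℝ :=
  ∑ i ∈ range n, dist (f (t (i + 1)) 0) (f (t i) 0) ^ p

/-- Marginal partition sum `Σ_j d^p(f(0,s_j), f(0,s_{j-1}))`. -/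
noncomputable def wSum2 (p : ℝ) (f : ℝ → ℝ → M) (m : ℕ) (s : ℕ → ℝ) : ℝ :=
  ∑ j ∈ range m, dist (f 0 (s (j + 1))) (f 0 (s j)) ^ p

/-- Double partition sum of the mixed differences. -/
noncomputable def wSum12 (p : ℝ) (f : ℝ → ℝ → M) (n : ℕ) (t : ℕ → ℝ)
    (m : ℕ) (s : ℕ → ℝ) : ℝ :=
  ∑ j ∈ range m, ∑ i ∈ range n,
    dist (f (t (i + 1)) (s (j + 1)) + f (t i) (s j))
         (f (t (i + 1)) (s j) + f (t i) (s (j + 1))) ^ p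

/-- Joint marginal sum for two functions. -/
noncomputable def wSum1J (p : ℝ) (f g : ℝ → ℝ → M) (n : ℕ) (t : ℕ → ℝ) : ℝ :=
  ∑ i ∈ range n,
    dist (f (t (i + 1)) 0 + g (t i) 0) (f (t i) 0 + g (t (i + 1)) 0) ^ p

noncomputable def wSum2J (p : ℝ) (f g : ℝ → ℝ → M) (m : ℕ) (s : ℕ → ℝ) : ℝ :=
  ∑ j ∈ range m,
    dist (f 0 (s (j + 1)) + g 0 (s j)) (f 0 (s j) + g 0 (s (j + 1))) ^ p

noncomputable def wSum12J (p : ℝ) (f g : ℝ → ℝ → M) (n : ℕ) (t : ℕ → ℝ)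
    (m : ℕ) (s : ℕ → ℝ) : ℝ :=
  ∑ j ∈ range m, ∑ i ∈ range n,
    dist (f (t (i + 1)) (s (j + 1)) + f (t i) (s j)
            + g (t (i + 1)) (s j) + g (t i) (s (j + 1)))
         (g (t (i + 1)) (s (j + 1)) + g (t i) (s j)
            + f (t (i + 1)) (s j) + f (t i) (s (j + 1))) ^ p

/-- The set of partition values of `V_p(f(·,0), Π)`. -/
def wSet1 (p : ℝ) (f : ℝ → ℝ → M) : Set ℝ :=
  {x | ∃ n t, IsPartition n t ∧ x = normW p (wSum1 p f n t)}

def wSet2 (p : ℝ) (f : ℝ → ℝ → M) : Set ℝ :=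
  {x | ∃ m s, IsPartition m s ∧ x = normW p (wSum2 p f m s)}

def wSet12 (p : ℝ) (f : ℝ → ℝ → M) : Set ℝ :=
  {x | ∃ n t m s, IsPartition n t ∧ IsPartition m s ∧ x = normW p (wSum12 p f n t m s)}

/-- Total Wiener `p`-variation `V_p(f) = V_p(f(·,0)) + V_p(f(0,·)) + V_{p,2}(f)`. -/
noncomputable def Vp (p : ℝ) (f : ℝ → ℝ → M) : ℝ :=
  sSup (wSet1 p f) + sSup (wSet2 p f) + sSup (wSet12 p f)

/-- `f` has bounded Wiener `p`-variation on `I × I`. -/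
def MemWBV (p : ℝ) (f : ℝ → ℝ → M) : Prop :=
  BddAbove (wSet1 p f) ∧ BddAbove (wSet2 p f) ∧ BddAbove (wSet12 p f)

/-- The joint variation of `f, g` over a fixed pair of partitions,
`V_p(f,g,Π×Π*)`. -/
noncomputable def VpPart (p : ℝ) (f g : ℝ → ℝ → M) (n : ℕ) (t : ℕ → ℝ)
    (m : ℕ) (s : ℕ → ℝ) : ℝ :=
  normW p (wSum1J p f g n t) + normW p (wSum2J p f g m s) + normW p (wSum12J p f g n t m s)

def wSetJ (p : ℝ) (f g : ℝ → ℝ → M) : Set ℝ :=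
  {x | ∃ n t m s, IsPartition n t ∧ IsPartition m s ∧ x = VpPart p f g n t m s}

/-- The joint Wiener `p`-variation `V_p(f,g)`. -/
noncomputable def VpJ (p : ℝ) (f g : ℝ → ℝ → M) : ℝ := sSup (wSetJ p f g)

/-- The metric `ρ_p(f,g) = d(f(0,0), g(0,0)) + V_p(f,g)` on `WBV_p(I×I, M)`. -/
noncomputable def rhoP (p : ℝ) (f g : ℝ → ℝ → M) : ℝ :=
  dist (f 0 0) (g 0 0) + VpJ p f g
open Filter

section AuxBasic
variable {M : Type*} [MetricSpace M] [AddCommSemigroup M]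

theorem wbv_cancel (hd : ∀ u v w : M, dist (u + w) (v + w) = dist u v)
    {a b c : M} (h : a + c = b + c) : a = b := by
  have h2 : dist a b = 0 := by rw [← hd a b c, h, dist_self]
  exact dist_eq_zero.mp h2

theorem wbv_hdl (hd : ∀ u v w : M, dist (u + w) (v + w) = dist u v)
    (a b c : M) : dist (c + a) (c + b) = dist a b := by
  rw [add_comm c a, add_comm c b]; exact hd a b c

theorem wbv_dist_add_add (hd : ∀ u v w : M, dist (u + w) (v + w) = dist u v)
    (a a' b b' : M) : dist (a + b) (a' + b') ≤ dist a a' + dist b b' :=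
  calc dist (a + b) (a' + b') ≤ dist (a + b) (a' + b) + dist (a' + b) (a' + b') :=
        dist_triangle _ _ _
    _ = dist a a' + dist b b' := by rw [hd, wbv_hdl hd]

theorem wbv_jointTri (hd : ∀ u v w : M, dist (u + w) (v + w) = dist u v)
    (F F' G G' H H' : M) :
    dist (F + G') (G + F') ≤ dist (F + H') (H + F') + dist (H + G') (G + H') := by
  have e0 : dist (F + G') (G + F') = dist (F + G' + (H + H')) (G + F' + (H + H')) :=
    (hd _ _ _).symm
  have e1 : F + G' + (H + H') = F + H' + (G' + H) := by ac_rfl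
  have e2 : H + F' + (G' + H) = H + G' + (F' + H) := by ac_rfl
  have e3 : G + F' + (H + H') = G + H' + (F' + H) := by ac_rfl
  calc dist (F + G') (G + F')
      = dist (F + H' + (G' + H)) (G + F' + (H + H')) := by rw [e0, e1]
    _ ≤ dist (F + H' + (G' + H)) (H + F' + (G' + H)) +
        dist (H + F' + (G' + H)) (G + F' + (H + H')) := dist_triangle _ _ _
    _ = dist (F + H') (H + F') + dist (H + G') (G + H') := by
        rw [hd (F + H') (H + F') (G' + H), e2, e3, hd (H + G') (G + H') (F' + H)]

theorem wbv_jointTri1 (hd : ∀ u v w : M, dist (u + w) (v + w) = dist u v)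
    (fa fb ga gb ha hb : M) :
    dist (fa + gb) (fb + ga) ≤ dist (fa + hb) (fb + ha) + dist (ha + gb) (hb + ga) := by
  have h := wbv_jointTri hd fa fb ga gb ha hb
  rwa [add_comm ga fb, add_comm ha fb, add_comm ga hb] at h

theorem wbv_jointTri12 (hd : ∀ u v w : M, dist (u + w) (v + w) = dist u v)
    (f1 f2 f3 f4 g1 g2 g3 g4 h1 h2 h3 h4 : M) :
    dist (f1 + f2 + g3 + g4) (g1 + g2 + f3 + f4) ≤
      dist (f1 + f2 + h3 + h4) (h1 + h2 + f3 + f4) +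
      dist (h1 + h2 + g3 + g4) (g1 + g2 + h3 + h4) := by
  have h := wbv_jointTri hd (f1 + f2) (f3 + f4) (g1 + g2) (g3 + g4) (h1 + h2) (h3 + h4)
  simpa only [← add_assoc] using h

theorem wbv_jointLe1 (hd : ∀ u v w : M, dist (u + w) (v + w) = dist u v)
    (fa fb ga gb : M) :
    dist (fa + gb) (fb + ga) ≤ dist fa fb + dist ga gb := by
  have h := wbv_dist_add_add hd fa fb gb ga
  rwa [dist_comm gb ga] at h

theorem wbv_jointLe12 (hd : ∀ u v w : M, dist (u + w) (v + w) = dist u v)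
    (f1 f2 f3 f4 g1 g2 g3 g4 : M) :
    dist (f1 + f2 + g3 + g4) (g1 + g2 + f3 + f4) ≤
      dist (f1 + f2) (f3 + f4) + dist (g1 + g2) (g3 + g4) := by
  have e1 : f1 + f2 + g3 + g4 = (f1 + f2) + (g3 + g4) := by ac_rfl
  have e2 : g1 + g2 + f3 + f4 = (f3 + f4) + (g1 + g2) := by ac_rfl
  rw [e1, e2]
  have h := wbv_dist_add_add hd (f1 + f2) (f3 + f4) (g3 + g4) (g1 + g2)
  rwa [dist_comm (g3 + g4)] at h

theorem wbv_singleLe1 (hd : ∀ u v w : M, dist (u + w) (v + w) = dist u v)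
    (fa fb ga gb : M) :
    dist fa fb ≤ dist (fa + gb) (fb + ga) + dist ga gb := by
  have e : dist fa fb = dist (fa + gb) (fb + gb) := (hd _ _ _).symm
  calc dist fa fb = dist (fa + gb) (fb + gb) := e
    _ ≤ dist (fa + gb) (fb + ga) + dist (fb + ga) (fb + gb) := dist_triangle _ _ _
    _ = dist (fa + gb) (fb + ga) + dist ga gb := by rw [wbv_hdl hd]

theorem wbv_singleLe12 (hd : ∀ u v w : M, dist (u + w) (v + w) = dist u v)
    (f1 f2 f3 f4 g1 g2 g3 g4 : M) :
    dist (f1 + f2) (f3 + f4) ≤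
      dist (f1 + f2 + g3 + g4) (g1 + g2 + f3 + f4) + dist (g1 + g2) (g3 + g4) := by
  have h := wbv_singleLe1 hd (f1 + f2) (f3 + f4) (g1 + g2) (g3 + g4)
  have e1 : (f1 + f2) + (g3 + g4) = f1 + f2 + g3 + g4 := by ac_rfl
  have e2 : (f3 + f4) + (g1 + g2) = g1 + g2 + f3 + f4 := by ac_rfl
  rwa [e1, e2] at h

theorem wbv_tendsto_add (hd : ∀ u v w : M, dist (u + w) (v + w) = dist u v)
    {a b : ℕ → M} {A B : M} (ha : Tendsto a atTop (nhds A)) (hb : Tendsto b atTop (nhds B)) :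
    Tendsto (fun v => a v + b v) atTop (nhds (A + B)) := by
  rw [tendsto_iff_dist_tendsto_zero]
  have h0 : Tendsto (fun v => dist (a v) A + dist (b v) B) atTop (nhds 0) := by
    have := (tendsto_iff_dist_tendsto_zero.mp ha).add (tendsto_iff_dist_tendsto_zero.mp hb)
    simpa using this
  exact squeeze_zero (fun v => dist_nonneg) (fun v => wbv_dist_add_add hd _ _ _ _) h0

end AuxBasic
section AuxNormW

noncomputable def phiW (p y : ℝ) : ℝ := if 1 ≤ p then y else y ^ (1 / p)

variable {p : ℝ}

theorem normW_nonneg (hp : 0 < p) {x : ℝ} (hx : 0 ≤ x) : 0 ≤ normW p x := by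
  unfold normW; split_ifs
  exacts [Real.rpow_nonneg hx _, hx]

theorem normW_mono (hp : 0 < p) {x y : ℝ} (hx : 0 ≤ x) (hxy : x ≤ y) :
    normW p x ≤ normW p y := by
  unfold normW; split_ifs
  exacts [Real.rpow_le_rpow hx hxy (by positivity), hxy]

theorem normW_zero (hp : 0 < p) : normW p 0 = 0 := by
  unfold normW; split_ifs
  exacts [Real.zero_rpow (by positivity : (0:ℝ) < 1 / p).ne', rfl]

theorem normW_eq_zero (hp : 0 < p) {x : ℝ} (hx : 0 ≤ x) (h : normW p x ≤ 0) : x = 0 := by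
  unfold normW at h; split_ifs at h with h1
  · have h2 : x ^ (1 / p) = 0 :=
      le_antisymm h (Real.rpow_nonneg hx _)
    have := (Real.rpow_eq_zero hx (by positivity : (0:ℝ) < 1 / p).ne').mp h2
    exact this
  · exact le_antisymm h hx

theorem phiW_nonneg (hp : 0 < p) {x : ℝ} (hx : 0 ≤ x) : 0 ≤ phiW p x := by
  unfold phiW; split_ifs
  exacts [hx, Real.rpow_nonneg hx _]

theorem phiW_mono (hp : 0 < p) {x y : ℝ} (hx : 0 ≤ x) (hxy : x ≤ y) :
    phiW p x ≤ phiW p y := by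
  unfold phiW; split_ifs
  exacts [hxy, Real.rpow_le_rpow hx hxy (by positivity)]

theorem phiW_zero (hp : 0 < p) : phiW p 0 = 0 := by
  unfold phiW; split_ifs
  exacts [rfl, Real.zero_rpow (by positivity : (0:ℝ) < 1 / p).ne']

theorem wbv_rpow_rpow_inv (hp : 0 < p) {x : ℝ} (hx : 0 ≤ x) : (x ^ p) ^ (1 / p) = x := by
  rw [← Real.rpow_mul hx, mul_one_div_cancel hp.ne', Real.rpow_one]

theorem wbv_rpow_add_le {x y q : ℝ} (hx : 0 ≤ x) (hy : 0 ≤ y) (hq : 0 ≤ q) (hq1 : q ≤ 1) :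
    (x + y) ^ q ≤ x ^ q + y ^ q := by
  have h := NNReal.coe_le_coe.2 (NNReal.rpow_add_le_add_rpow ⟨x, hx⟩ ⟨y, hy⟩ hq hq1)
  push_cast at h
  convert h using 2 <;> rfl

theorem normW_add_le (hp : 0 < p) {ι : Type*} (S : Finset ι) (a b c : ι → ℝ)
    (ha : ∀ i ∈ S, 0 ≤ a i) (hb : ∀ i ∈ S, 0 ≤ b i) (hc : ∀ i ∈ S, 0 ≤ c i)
    (h : ∀ i ∈ S, a i ≤ b i + c i) :
    normW p (∑ i ∈ S, a i ^ p) ≤ normW p (∑ i ∈ S, b i ^ p) + normW p (∑ i ∈ S, c i ^ p) := by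
  have hbc : ∑ i ∈ S, a i ^ p ≤ ∑ i ∈ S, (b i + c i) ^ p :=
    Finset.sum_le_sum fun i hi => Real.rpow_le_rpow (ha i hi) (h i hi) hp.le
  unfold normW; split_ifs with h1
  · calc (∑ i ∈ S, a i ^ p) ^ (1 / p)
        ≤ (∑ i ∈ S, (b i + c i) ^ p) ^ (1 / p) :=
          Real.rpow_le_rpow
            (Finset.sum_nonneg fun i hi => Real.rpow_nonneg (ha i hi) _) hbc (by positivity)
      _ ≤ _ := Real.Lp_add_le_of_nonneg (s := S) (f := b) (g := c) h1 hb hc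
  · calc ∑ i ∈ S, a i ^ p ≤ ∑ i ∈ S, (b i + c i) ^ p := hbc
      _ ≤ ∑ i ∈ S, (b i ^ p + c i ^ p) :=
          Finset.sum_le_sum fun i hi =>
            wbv_rpow_add_le (hb i hi) (hc i hi) hp.le (le_of_not_ge h1)
      _ = _ := Finset.sum_add_distrib

theorem normW_add_le_double (hp : 0 < p) (m n : ℕ) (a b c : ℕ → ℕ → ℝ)
    (ha : ∀ j i, 0 ≤ a j i) (hb : ∀ j i, 0 ≤ b j i) (hc : ∀ j i, 0 ≤ c j i)
    (h : ∀ j i, a j i ≤ b j i + c j i) :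
    normW p (∑ j ∈ range m, ∑ i ∈ range n, a j i ^ p) ≤
      normW p (∑ j ∈ range m, ∑ i ∈ range n, b j i ^ p) +
      normW p (∑ j ∈ range m, ∑ i ∈ range n, c j i ^ p) := by
  have ea : ∑ j ∈ range m, ∑ i ∈ range n, a j i ^ p
      = ∑ q ∈ range m ×ˢ range n, (fun q : ℕ × ℕ => a q.1 q.2) q ^ p :=
    (Finset.sum_product (range m) (range n) (fun q : ℕ × ℕ => a q.1 q.2 ^ p)).symm
  have eb : ∑ j ∈ range m, ∑ i ∈ range n, b j i ^ p
      = ∑ q ∈ range m ×ˢ range n, (fun q : ℕ × ℕ => b q.1 q.2) q ^ p :=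
    (Finset.sum_product (range m) (range n) (fun q : ℕ × ℕ => b q.1 q.2 ^ p)).symm
  have ec : ∑ j ∈ range m, ∑ i ∈ range n, c j i ^ p
      = ∑ q ∈ range m ×ˢ range n, (fun q : ℕ × ℕ => c q.1 q.2) q ^ p :=
    (Finset.sum_product (range m) (range n) (fun q : ℕ × ℕ => c q.1 q.2 ^ p)).symm
  rw [ea, eb, ec]
  exact normW_add_le hp _ _ _ _ (fun q _ => ha q.1 q.2) (fun q _ => hb q.1 q.2)
    (fun q _ => hc q.1 q.2) (fun q _ => h q.1 q.2)

theorem term_le_phiW (hp : 0 < p) {x S V : ℝ} (hx : 0 ≤ x) (hS : 0 ≤ S)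
    (hxS : x ^ p ≤ S) (hSV : normW p S ≤ V) : x ≤ phiW p V := by
  have hxe : (x ^ p) ^ (1 / p) = x := wbv_rpow_rpow_inv hp hx
  unfold normW at hSV; unfold phiW; split_ifs at hSV ⊢ with h1
  · calc x = (x ^ p) ^ (1 / p) := hxe.symm
      _ ≤ S ^ (1 / p) := Real.rpow_le_rpow (Real.rpow_nonneg hx _) hxS (by positivity)
      _ ≤ V := hSV
  · calc x = (x ^ p) ^ (1 / p) := hxe.symm
      _ ≤ V ^ (1 / p) := Real.rpow_le_rpow (Real.rpow_nonneg hx _) (hxS.trans hSV) (by positivity)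

theorem phiW_bound (hp : 0 < p) {r e : ℝ} (hr0 : 0 ≤ r) (he : 0 < e)
    (h : r < min (e / 7) ((e / 7) ^ p)) : 3 * r + 3 * phiW p r < e := by
  have h1 : r < e / 7 := lt_of_lt_of_le h (min_le_left _ _)
  have h2 : r < (e / 7) ^ p := lt_of_lt_of_le h (min_le_right _ _)
  unfold phiW; split_ifs with hp1
  · linarith
  · have h3 : r ^ (1 / p) < ((e / 7) ^ p) ^ (1 / p) :=
      Real.rpow_lt_rpow hr0 h2 (by positivity)
    have h4 : ((e / 7) ^ p) ^ (1 / p) = e / 7 := wbv_rpow_rpow_inv hp (by linarith)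
    rw [h4] at h3
    linarith

theorem tendsto_normW (hp : 0 < p) {S : ℕ → ℝ} {L : ℝ}
    (h : Filter.Tendsto S Filter.atTop (nhds L)) :
    Filter.Tendsto (fun v => normW p (S v)) Filter.atTop (nhds (normW p L)) := by
  unfold normW; split_ifs
  · exact h.rpow_const (Or.inr (by positivity))
  · exact h

end AuxNormW

section AuxPartition

theorem isPartition_triv : IsPartition 1 (fun i => (i : ℝ)) :=
  ⟨one_pos, by norm_num, by norm_num, fun i _ => by push_cast; linarith⟩

theorem partition_le {n : ℕ} {t : ℕ → ℝ} (h : IsPartition n t) :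
    ∀ {i j : ℕ}, i ≤ j → j ≤ n → t i ≤ t j := by
  intro i j hij hjn
  induction j with
  | zero => exact le_of_eq (by rw [Nat.le_zero.mp hij])
  | succ k ih =>
    rcases Nat.eq_or_lt_of_le hij with rfl | hlt
    · exact le_rfl
    · have hk : k < n := Nat.lt_of_lt_of_le (Nat.lt_succ_self k) hjn
      exact (ih (Nat.lt_succ_iff.mp hlt) hk.le).trans (h.2.2.2 k hk).le

theorem partition_mem {n : ℕ} {t : ℕ → ℝ} (h : IsPartition n t) {i : ℕ} (hi : i ≤ n) :
    t i ∈ Set.Icc (0 : ℝ) 1 :=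
  ⟨h.2.1 ▸ partition_le h (Nat.zero_le i) hi, h.2.2.1 ▸ partition_le h hi le_rfl⟩

noncomputable def pttW (a : ℝ) : ℕ → ℝ := fun i => if i = 0 then 0 else if i = 1 then a else 1

noncomputable def pnnW (a : ℝ) : ℕ := if a = 1 then 1 else 2

theorem pttW_zero (a : ℝ) : pttW a 0 = 0 := rfl

theorem pttW_one (a : ℝ) : pttW a 1 = a := rfl

theorem pnnW_pos (a : ℝ) : 0 < pnnW a := by
  unfold pnnW; split_ifs <;> norm_num

theorem isPartition_pttW {a : ℝ} (h0 : 0 < a) (h1 : a ≤ 1) :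
    IsPartition (pnnW a) (pttW a) := by
  unfold pnnW pttW; split_ifs with ha
  · exact ⟨one_pos, rfl, by simp [ha], fun i hi => by interval_cases i; simpa using h0⟩
  · refine ⟨two_pos, rfl, by norm_num, fun i hi => ?_⟩
    interval_cases i
    · simpa using h0
    · simpa using lt_of_le_of_ne h1 ha

end AuxPartition
section AuxVar

variable {M : Type*} [MetricSpace M] [AddCommSemigroup M] {p : ℝ}

theorem wSum1_nonneg (p : ℝ) (f : ℝ → ℝ → M) (n : ℕ) (t : ℕ → ℝ) : 0 ≤ wSum1 p f n t :=
  Finset.sum_nonneg fun i _ => Real.rpow_nonneg dist_nonneg _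

theorem wSum2_nonneg (p : ℝ) (f : ℝ → ℝ → M) (m : ℕ) (s : ℕ → ℝ) : 0 ≤ wSum2 p f m s :=
  Finset.sum_nonneg fun i _ => Real.rpow_nonneg dist_nonneg _

theorem wSum12_nonneg (p : ℝ) (f : ℝ → ℝ → M) (n : ℕ) (t : ℕ → ℝ) (m : ℕ) (s : ℕ → ℝ) :
    0 ≤ wSum12 p f n t m s :=
  Finset.sum_nonneg fun _ _ => Finset.sum_nonneg fun _ _ => Real.rpow_nonneg dist_nonneg _

theorem wSum1J_nonneg (p : ℝ) (f g : ℝ → ℝ → M) (n : ℕ) (t : ℕ → ℝ) : 0 ≤ wSum1J p f g n t :=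
  Finset.sum_nonneg fun i _ => Real.rpow_nonneg dist_nonneg _

theorem wSum2J_nonneg (p : ℝ) (f g : ℝ → ℝ → M) (m : ℕ) (s : ℕ → ℝ) : 0 ≤ wSum2J p f g m s :=
  Finset.sum_nonneg fun i _ => Real.rpow_nonneg dist_nonneg _

theorem wSum12J_nonneg (p : ℝ) (f g : ℝ → ℝ → M) (n : ℕ) (t : ℕ → ℝ) (m : ℕ) (s : ℕ → ℝ) :
    0 ≤ wSum12J p f g n t m s :=
  Finset.sum_nonneg fun _ _ => Finset.sum_nonneg fun _ _ => Real.rpow_nonneg dist_nonneg _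

theorem VpPart_nonneg (hp : 0 < p) (f g : ℝ → ℝ → M) (n : ℕ) (t : ℕ → ℝ) (m : ℕ) (s : ℕ → ℝ) :
    0 ≤ VpPart p f g n t m s :=
  add_nonneg (add_nonneg (normW_nonneg hp (wSum1J_nonneg p f g n t))
    (normW_nonneg hp (wSum2J_nonneg p f g m s))) (normW_nonneg hp (wSum12J_nonneg p f g n t m s))

theorem VpPart_mem {f g : ℝ → ℝ → M} {n : ℕ} {t : ℕ → ℝ} {m : ℕ} {s : ℕ → ℝ}
    (hnt : IsPartition n t) (hms : IsPartition m s) :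
    VpPart p f g n t m s ∈ wSetJ p f g :=
  ⟨n, t, m, s, hnt, hms, rfl⟩

theorem VpJ_nonneg (hp : 0 < p) {f g : ℝ → ℝ → M} (hB : BddAbove (wSetJ p f g)) :
    0 ≤ VpJ p f g :=
  (VpPart_nonneg hp f g 1 _ 1 _).trans (le_csSup hB (VpPart_mem isPartition_triv isPartition_triv))

theorem normW_wSum1J_le (hp : 0 < p) {f g : ℝ → ℝ → M} (hB : BddAbove (wSetJ p f g))
    {n : ℕ} {t : ℕ → ℝ} (hnt : IsPartition n t) :
    normW p (wSum1J p f g n t) ≤ VpJ p f g := by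
  have h := le_csSup hB (VpPart_mem (p := p) (f := f) (g := g) hnt isPartition_triv)
  unfold VpPart at h
  have h2 := normW_nonneg hp (wSum2J_nonneg p f g 1 (fun i => (i : ℝ)))
  have h12 := normW_nonneg hp (wSum12J_nonneg p f g n t 1 (fun i => (i : ℝ)))
  unfold VpJ; linarith

theorem normW_wSum2J_le (hp : 0 < p) {f g : ℝ → ℝ → M} (hB : BddAbove (wSetJ p f g))
    {m : ℕ} {s : ℕ → ℝ} (hms : IsPartition m s) :
    normW p (wSum2J p f g m s) ≤ VpJ p f g := by
  have h := le_csSup hB (VpPart_mem (p := p) (f := f) (g := g) isPartition_triv hms)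
  unfold VpPart at h
  have h1 := normW_nonneg hp (wSum1J_nonneg p f g 1 (fun i => (i : ℝ)))
  have h12 := normW_nonneg hp (wSum12J_nonneg p f g 1 (fun i => (i : ℝ)) m s)
  unfold VpJ; linarith

theorem normW_wSum12J_le (hp : 0 < p) {f g : ℝ → ℝ → M} (hB : BddAbove (wSetJ p f g))
    {n : ℕ} {t : ℕ → ℝ} {m : ℕ} {s : ℕ → ℝ} (hnt : IsPartition n t) (hms : IsPartition m s) :
    normW p (wSum12J p f g n t m s) ≤ VpJ p f g := by
  have h := le_csSup hB (VpPart_mem (p := p) (f := f) (g := g) hnt hms)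
  unfold VpPart at h
  have h1 := normW_nonneg hp (wSum1J_nonneg p f g n t)
  have h2 := normW_nonneg hp (wSum2J_nonneg p f g m s)
  unfold VpJ; linarith

theorem bddAbove_wSetJ (hd : ∀ u v w : M, dist (u + w) (v + w) = dist u v) (hp : 0 < p)
    {f g : ℝ → ℝ → M} (hf : MemWBV p f) (hg : MemWBV p g) :
    BddAbove (wSetJ p f g) := by
  obtain ⟨B1, hB1⟩ := hf.1
  obtain ⟨B2, hB2⟩ := hf.2.1
  obtain ⟨B12, hB12⟩ := hf.2.2
  obtain ⟨C1, hC1⟩ := hg.1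
  obtain ⟨C2, hC2⟩ := hg.2.1
  obtain ⟨C12, hC12⟩ := hg.2.2
  refine ⟨B1 + C1 + (B2 + C2) + (B12 + C12), ?_⟩
  rintro x ⟨n, t, m, s, hnt, hms, rfl⟩
  unfold VpPart
  have h1 : normW p (wSum1J p f g n t) ≤ B1 + C1 := by
    have key : normW p (wSum1J p f g n t) ≤
        normW p (wSum1 p f n t) + normW p (wSum1 p g n t) := by
      unfold wSum1J wSum1
      exact normW_add_le hp _ _ _ _ (fun i _ => dist_nonneg) (fun i _ => dist_nonneg)
        (fun i _ => dist_nonneg) (fun i _ => wbv_jointLe1 hd _ _ _ _)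
    exact key.trans (add_le_add (hB1 ⟨n, t, hnt, rfl⟩) (hC1 ⟨n, t, hnt, rfl⟩))
  have h2 : normW p (wSum2J p f g m s) ≤ B2 + C2 := by
    have key : normW p (wSum2J p f g m s) ≤
        normW p (wSum2 p f m s) + normW p (wSum2 p g m s) := by
      unfold wSum2J wSum2
      exact normW_add_le hp _ _ _ _ (fun i _ => dist_nonneg) (fun i _ => dist_nonneg)
        (fun i _ => dist_nonneg) (fun i _ => wbv_jointLe1 hd _ _ _ _)
    exact key.trans (add_le_add (hB2 ⟨m, s, hms, rfl⟩) (hC2 ⟨m, s, hms, rfl⟩))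
  have h12 : normW p (wSum12J p f g n t m s) ≤ B12 + C12 := by
    have key : normW p (wSum12J p f g n t m s) ≤
        normW p (wSum12 p f n t m s) + normW p (wSum12 p g n t m s) := by
      unfold wSum12J wSum12
      exact normW_add_le_double hp _ _ _ _ _ (fun j i => dist_nonneg) (fun j i => dist_nonneg)
        (fun j i => dist_nonneg) (fun j i => wbv_jointLe12 hd _ _ _ _ _ _ _ _)
    exact key.trans (add_le_add (hB12 ⟨n, t, m, s, hnt, hms, rfl⟩)
      (hC12 ⟨n, t, m, s, hnt, hms, rfl⟩))
  linarith

theorem VpPart_symm (f g : ℝ → ℝ → M) (n : ℕ) (t : ℕ → ℝ) (m : ℕ) (s : ℕ → ℝ) :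
    VpPart p f g n t m s = VpPart p g f n t m s := by
  unfold VpPart
  have e1 : wSum1J p f g n t = wSum1J p g f n t := by
    unfold wSum1J
    refine Finset.sum_congr rfl fun i _ => ?_
    rw [dist_comm, add_comm (f (t (i + 1)) 0) (g (t i) 0), add_comm (f (t i) 0) (g (t (i + 1)) 0)]
  have e2 : wSum2J p f g m s = wSum2J p g f m s := by
    unfold wSum2J
    refine Finset.sum_congr rfl fun j _ => ?_
    rw [dist_comm, add_comm (f 0 (s (j + 1))) (g 0 (s j)), add_comm (f 0 (s j)) (g 0 (s (j + 1)))]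
  have e12 : wSum12J p f g n t m s = wSum12J p g f n t m s := by
    unfold wSum12J
    exact Finset.sum_congr rfl fun j _ => Finset.sum_congr rfl fun i _ => by rw [dist_comm]
  rw [e1, e2, e12]

theorem VpJ_symm (f g : ℝ → ℝ → M) : VpJ p f g = VpJ p g f := by
  unfold VpJ
  congr 1
  ext x
  constructor
  · rintro ⟨n, t, m, s, hnt, hms, rfl⟩
    exact ⟨n, t, m, s, hnt, hms, VpPart_symm f g n t m s⟩
  · rintro ⟨n, t, m, s, hnt, hms, rfl⟩
    exact ⟨n, t, m, s, hnt, hms, VpPart_symm g f n t m s⟩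

theorem VpPart_tri (hd : ∀ u v w : M, dist (u + w) (v + w) = dist u v) (hp : 0 < p)
    (f₁ f₂ f₃ : ℝ → ℝ → M) (n : ℕ) (t : ℕ → ℝ) (m : ℕ) (s : ℕ → ℝ) :
    VpPart p f₁ f₂ n t m s ≤ VpPart p f₁ f₃ n t m s + VpPart p f₃ f₂ n t m s := by
  unfold VpPart
  have h1 : normW p (wSum1J p f₁ f₂ n t) ≤
      normW p (wSum1J p f₁ f₃ n t) + normW p (wSum1J p f₃ f₂ n t) := by
    unfold wSum1J
    exact normW_add_le hp _ _ _ _ (fun i _ => dist_nonneg) (fun i _ => dist_nonneg)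
      (fun i _ => dist_nonneg) (fun i _ => wbv_jointTri1 hd _ _ _ _ _ _)
  have h2 : normW p (wSum2J p f₁ f₂ m s) ≤
      normW p (wSum2J p f₁ f₃ m s) + normW p (wSum2J p f₃ f₂ m s) := by
    unfold wSum2J
    exact normW_add_le hp _ _ _ _ (fun i _ => dist_nonneg) (fun i _ => dist_nonneg)
      (fun i _ => dist_nonneg) (fun i _ => wbv_jointTri1 hd _ _ _ _ _ _)
  have h12 : normW p (wSum12J p f₁ f₂ n t m s) ≤
      normW p (wSum12J p f₁ f₃ n t m s) + normW p (wSum12J p f₃ f₂ n t m s) := by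
    unfold wSum12J
    exact normW_add_le_double hp _ _ _ _ _ (fun j i => dist_nonneg) (fun j i => dist_nonneg)
      (fun j i => dist_nonneg) (fun j i => wbv_jointTri12 hd _ _ _ _ _ _ _ _ _ _ _ _)
  linarith

end AuxVar
section AuxPointwise

variable {M : Type*} [MetricSpace M] [AddCommSemigroup M] {p : ℝ}

theorem joint_term1_le (hp : 0 < p) {f g : ℝ → ℝ → M} (hB : BddAbove (wSetJ p f g))
    {a : ℝ} (h0 : 0 < a) (h1 : a ≤ 1) :
    dist (f a 0 + g 0 0) (f 0 0 + g a 0) ≤ phiW p (VpJ p f g) := by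
  have hpart := isPartition_pttW h0 h1
  have h0m : (0 : ℕ) ∈ range (pnnW a) := mem_range.mpr (pnnW_pos a)
  have hterm : dist (f a 0 + g 0 0) (f 0 0 + g a 0) ^ p ≤ wSum1J p f g (pnnW a) (pttW a) := by
    have h2 := Finset.single_le_sum
      (f := fun i => dist (f (pttW a (i + 1)) 0 + g (pttW a i) 0)
        (f (pttW a i) 0 + g (pttW a (i + 1)) 0) ^ p)
      (fun i _ => Real.rpow_nonneg dist_nonneg _) h0m
    unfold wSum1J
    simpa [pttW] using h2
  exact term_le_phiW hp dist_nonneg (wSum1J_nonneg p f g _ _) hterm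
    (normW_wSum1J_le hp hB hpart)

theorem joint_term2_le (hp : 0 < p) {f g : ℝ → ℝ → M} (hB : BddAbove (wSetJ p f g))
    {a : ℝ} (h0 : 0 < a) (h1 : a ≤ 1) :
    dist (f 0 a + g 0 0) (f 0 0 + g 0 a) ≤ phiW p (VpJ p f g) := by
  have hpart := isPartition_pttW h0 h1
  have h0m : (0 : ℕ) ∈ range (pnnW a) := mem_range.mpr (pnnW_pos a)
  have hterm : dist (f 0 a + g 0 0) (f 0 0 + g 0 a) ^ p ≤ wSum2J p f g (pnnW a) (pttW a) := by
    have h2 := Finset.single_le_sum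
      (f := fun j => dist (f 0 (pttW a (j + 1)) + g 0 (pttW a j))
        (f 0 (pttW a j) + g 0 (pttW a (j + 1))) ^ p)
      (fun i _ => Real.rpow_nonneg dist_nonneg _) h0m
    unfold wSum2J
    simpa [pttW] using h2
  exact term_le_phiW hp dist_nonneg (wSum2J_nonneg p f g _ _) hterm
    (normW_wSum2J_le hp hB hpart)

theorem joint_term12_le (hp : 0 < p) {f g : ℝ → ℝ → M} (hB : BddAbove (wSetJ p f g))
    {a b : ℝ} (ha0 : 0 < a) (ha1 : a ≤ 1) (hb0 : 0 < b) (hb1 : b ≤ 1) :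
    dist (f a b + f 0 0 + g a 0 + g 0 b) (g a b + g 0 0 + f a 0 + f 0 b) ≤
      phiW p (VpJ p f g) := by
  have hpa := isPartition_pttW ha0 ha1
  have hpb := isPartition_pttW hb0 hb1
  have h0a : (0 : ℕ) ∈ range (pnnW a) := mem_range.mpr (pnnW_pos a)
  have h0b : (0 : ℕ) ∈ range (pnnW b) := mem_range.mpr (pnnW_pos b)
  have hterm : dist (f a b + f 0 0 + g a 0 + g 0 b) (g a b + g 0 0 + f a 0 + f 0 b) ^ p ≤
      wSum12J p f g (pnnW a) (pttW a) (pnnW b) (pttW b) := by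
    set T : ℕ → ℕ → ℝ := fun j i =>
      dist (f (pttW a (i + 1)) (pttW b (j + 1)) + f (pttW a i) (pttW b j)
          + g (pttW a (i + 1)) (pttW b j) + g (pttW a i) (pttW b (j + 1)))
        (g (pttW a (i + 1)) (pttW b (j + 1)) + g (pttW a i) (pttW b j)
          + f (pttW a (i + 1)) (pttW b j) + f (pttW a i) (pttW b (j + 1))) ^ p with hT
    have hinner : T 0 0 ≤ ∑ i ∈ range (pnnW a), T 0 i :=
      Finset.single_le_sum (f := fun i => T 0 i)
        (fun i _ => Real.rpow_nonneg dist_nonneg _) h0a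
    have houter : ∑ i ∈ range (pnnW a), T 0 i ≤
        ∑ j ∈ range (pnnW b), ∑ i ∈ range (pnnW a), T j i :=
      Finset.single_le_sum
        (f := fun j => ∑ i ∈ range (pnnW a), T j i)
        (fun j _ => Finset.sum_nonneg fun i _ => Real.rpow_nonneg dist_nonneg _) h0b
    have hfin := hinner.trans houter
    unfold wSum12J
    simpa [hT, pttW] using hfin
  exact term_le_phiW hp dist_nonneg (wSum12J_nonneg p f g _ _ _ _) hterm
    (normW_wSum12J_le hp hB hpa hpb)

theorem dist_margin1 (hd : ∀ u v w : M, dist (u + w) (v + w) = dist u v) (hp : 0 < p)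
    {f g : ℝ → ℝ → M} (hB : BddAbove (wSetJ p f g)) {a : ℝ} (ha : a ∈ Set.Icc (0 : ℝ) 1) :
    dist (f a 0) (g a 0) ≤ dist (f 0 0) (g 0 0) + phiW p (VpJ p f g) := by
  rcases eq_or_lt_of_le ha.1 with h|h0
  · rw [← h]
    exact le_add_of_nonneg_right (phiW_nonneg hp (VpJ_nonneg hp hB))
  · calc dist (f a 0) (g a 0) = dist (f a 0 + g 0 0) (g a 0 + g 0 0) := (hd _ _ _).symm
      _ ≤ dist (f a 0 + g 0 0) (f 0 0 + g a 0) + dist (f 0 0 + g a 0) (g a 0 + g 0 0) :=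
          dist_triangle _ _ _
      _ ≤ phiW p (VpJ p f g) + dist (f 0 0) (g 0 0) := by
          refine add_le_add (joint_term1_le hp hB h0 ha.2) (le_of_eq ?_)
          rw [add_comm (f 0 0) (g a 0)]
          exact wbv_hdl hd _ _ _
      _ = dist (f 0 0) (g 0 0) + phiW p (VpJ p f g) := add_comm _ _

theorem dist_margin2 (hd : ∀ u v w : M, dist (u + w) (v + w) = dist u v) (hp : 0 < p)
    {f g : ℝ → ℝ → M} (hB : BddAbove (wSetJ p f g)) {b : ℝ} (hb : b ∈ Set.Icc (0 : ℝ) 1) :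
    dist (f 0 b) (g 0 b) ≤ dist (f 0 0) (g 0 0) + phiW p (VpJ p f g) := by
  rcases eq_or_lt_of_le hb.1 with h|h0
  · rw [← h]
    exact le_add_of_nonneg_right (phiW_nonneg hp (VpJ_nonneg hp hB))
  · calc dist (f 0 b) (g 0 b) = dist (f 0 b + g 0 0) (g 0 b + g 0 0) := (hd _ _ _).symm
      _ ≤ dist (f 0 b + g 0 0) (f 0 0 + g 0 b) + dist (f 0 0 + g 0 b) (g 0 b + g 0 0) :=
          dist_triangle _ _ _
      _ ≤ phiW p (VpJ p f g) + dist (f 0 0) (g 0 0) := by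
          refine add_le_add (joint_term2_le hp hB h0 hb.2) (le_of_eq ?_)
          rw [add_comm (f 0 0) (g 0 b)]
          exact wbv_hdl hd _ _ _
      _ = dist (f 0 0) (g 0 0) + phiW p (VpJ p f g) := add_comm _ _

theorem dist_apply_le (hd : ∀ u v w : M, dist (u + w) (v + w) = dist u v) (hp : 0 < p)
    {f g : ℝ → ℝ → M} (hB : BddAbove (wSetJ p f g)) {a b : ℝ}
    (ha : a ∈ Set.Icc (0 : ℝ) 1) (hb : b ∈ Set.Icc (0 : ℝ) 1) :
    dist (f a b) (g a b) ≤ 3 * dist (f 0 0) (g 0 0) + 3 * phiW p (VpJ p f g) := by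
  have hE : 0 ≤ phiW p (VpJ p f g) := phiW_nonneg hp (VpJ_nonneg hp hB)
  have hD : (0:ℝ) ≤ dist (f 0 0) (g 0 0) := dist_nonneg
  rcases eq_or_lt_of_le ha.1 with h|ha0
  · rw [← h]
    have := dist_margin2 hd hp hB hb
    linarith
  rcases eq_or_lt_of_le hb.1 with h|hb0
  · rw [← h]
    have := dist_margin1 hd hp hB ha
    linarith
  have h12 := joint_term12_le hp hB ha0 ha.2 hb0 hb.2
  have hm1 := dist_margin1 hd hp hB ha
  have hm2 := dist_margin2 hd hp hB hb
  have e1 : f a b + (f 0 0 + g a 0 + g 0 b) = f a b + f 0 0 + g a 0 + g 0 b := by ac_rfl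
  have e2 : g a b + (g 0 0 + f a 0 + f 0 b) = g a b + g 0 0 + f a 0 + f 0 b := by ac_rfl
  have t1 : dist (f a b) (g a b) =
      dist (f a b + (f 0 0 + g a 0 + g 0 b)) (g a b + (f 0 0 + g a 0 + g 0 b)) := (hd _ _ _).symm
  have t2 : dist (g a b + (g 0 0 + f a 0 + f 0 b)) (g a b + (f 0 0 + g a 0 + g 0 b)) =
      dist (g 0 0 + f a 0 + f 0 b) (f 0 0 + g a 0 + g 0 b) := wbv_hdl hd _ _ _
  have t3 : dist (g 0 0 + f a 0 + f 0 b) (f 0 0 + g a 0 + g 0 b) ≤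
      dist (g 0 0) (f 0 0) + dist (f a 0) (g a 0) + dist (f 0 b) (g 0 b) :=
    (wbv_dist_add_add hd _ _ _ _).trans
      (add_le_add (wbv_dist_add_add hd _ _ _ _) le_rfl)
  have key : dist (f a b) (g a b) ≤
      dist (f a b + f 0 0 + g a 0 + g 0 b) (g a b + g 0 0 + f a 0 + f 0 b) +
        (dist (g 0 0) (f 0 0) + dist (f a 0) (g a 0) + dist (f 0 b) (g 0 b)) := by
    calc dist (f a b) (g a b)
        ≤ dist (f a b + (f 0 0 + g a 0 + g 0 b)) (g a b + (g 0 0 + f a 0 + f 0 b)) +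
          dist (g a b + (g 0 0 + f a 0 + f 0 b)) (g a b + (f 0 0 + g a 0 + g 0 b)) := by
          rw [t1]; exact dist_triangle _ _ _
      _ ≤ _ := by rw [t2, e1, e2]; exact add_le_add_right t3 _
  rw [dist_comm (g 0 0) (f 0 0)] at key
  linarith

end AuxPointwise
section AuxTendsto

open Filter

theorem zero_mem_Icc01 : (0 : ℝ) ∈ Set.Icc (0 : ℝ) 1 := ⟨le_rfl, zero_le_one⟩

variable {M : Type*} [MetricSpace M] [AddCommSemigroup M] {p : ℝ}
variable {F : ℕ → ℝ → ℝ → M} {f : ℝ → ℝ → M}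

theorem tendsto_wSum1W (hp : 0 < p)
    (hlim : ∀ a ∈ Set.Icc (0:ℝ) 1, ∀ b ∈ Set.Icc (0:ℝ) 1,
      Tendsto (fun v => F v a b) atTop (nhds (f a b)))
    {n : ℕ} {t : ℕ → ℝ} (hnt : IsPartition n t) :
    Tendsto (fun v => wSum1 p (F v) n t) atTop (nhds (wSum1 p f n t)) := by
  unfold wSum1
  apply tendsto_finset_sum
  intro i hi
  have hi' := mem_range.mp hi
  exact ((hlim _ (partition_mem hnt hi') 0 zero_mem_Icc01).dist
    (hlim _ (partition_mem hnt hi'.le) 0 zero_mem_Icc01)).rpow_const (Or.inr hp.le)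

theorem tendsto_wSum2W (hp : 0 < p)
    (hlim : ∀ a ∈ Set.Icc (0:ℝ) 1, ∀ b ∈ Set.Icc (0:ℝ) 1,
      Tendsto (fun v => F v a b) atTop (nhds (f a b)))
    {m : ℕ} {s : ℕ → ℝ} (hms : IsPartition m s) :
    Tendsto (fun v => wSum2 p (F v) m s) atTop (nhds (wSum2 p f m s)) := by
  unfold wSum2
  apply tendsto_finset_sum
  intro j hj
  have hj' := mem_range.mp hj
  exact ((hlim 0 zero_mem_Icc01 _ (partition_mem hms hj')).dist
    (hlim 0 zero_mem_Icc01 _ (partition_mem hms hj'.le))).rpow_const (Or.inr hp.le)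

theorem tendsto_wSum12W (hd : ∀ u v w : M, dist (u + w) (v + w) = dist u v) (hp : 0 < p)
    (hlim : ∀ a ∈ Set.Icc (0:ℝ) 1, ∀ b ∈ Set.Icc (0:ℝ) 1,
      Tendsto (fun v => F v a b) atTop (nhds (f a b)))
    {n : ℕ} {t : ℕ → ℝ} {m : ℕ} {s : ℕ → ℝ} (hnt : IsPartition n t) (hms : IsPartition m s) :
    Tendsto (fun v => wSum12 p (F v) n t m s) atTop (nhds (wSum12 p f n t m s)) := by
  unfold wSum12
  apply tendsto_finset_sum
  intro j hj
  apply tendsto_finset_sum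
  intro i hi
  have hi' := mem_range.mp hi
  have hj' := mem_range.mp hj
  have m1 := partition_mem hnt hi'
  have m0 := partition_mem hnt hi'.le
  have n1 := partition_mem hms hj'
  have n0 := partition_mem hms hj'.le
  exact ((wbv_tendsto_add hd (hlim _ m1 _ n1) (hlim _ m0 _ n0)).dist
    (wbv_tendsto_add hd (hlim _ m1 _ n0) (hlim _ m0 _ n1))).rpow_const (Or.inr hp.le)

theorem tendsto_VpPartW (hd : ∀ u v w : M, dist (u + w) (v + w) = dist u v) (hp : 0 < p)
    (hlim : ∀ a ∈ Set.Icc (0:ℝ) 1, ∀ b ∈ Set.Icc (0:ℝ) 1,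
      Tendsto (fun v => F v a b) atTop (nhds (f a b)))
    {n : ℕ} {t : ℕ → ℝ} {m : ℕ} {s : ℕ → ℝ} (hnt : IsPartition n t) (hms : IsPartition m s)
    (g : ℝ → ℝ → M) :
    Tendsto (fun v => VpPart p g (F v) n t m s) atTop (nhds (VpPart p g f n t m s)) := by
  unfold VpPart
  have h1 : Tendsto (fun v => wSum1J p g (F v) n t) atTop (nhds (wSum1J p g f n t)) := by
    unfold wSum1J
    apply tendsto_finset_sum
    intro i hi
    have hi' := mem_range.mp hi
    exact ((wbv_tendsto_add hd tendsto_const_nhds (hlim _ (partition_mem hnt hi'.le) 0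
        zero_mem_Icc01)).dist
      (wbv_tendsto_add hd tendsto_const_nhds (hlim _ (partition_mem hnt hi') 0
        zero_mem_Icc01))).rpow_const (Or.inr hp.le)
  have h2 : Tendsto (fun v => wSum2J p g (F v) m s) atTop (nhds (wSum2J p g f m s)) := by
    unfold wSum2J
    apply tendsto_finset_sum
    intro j hj
    have hj' := mem_range.mp hj
    exact ((wbv_tendsto_add hd tendsto_const_nhds (hlim 0 zero_mem_Icc01 _
        (partition_mem hms hj'.le))).dist
      (wbv_tendsto_add hd tendsto_const_nhds (hlim 0 zero_mem_Icc01 _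
        (partition_mem hms hj')))).rpow_const (Or.inr hp.le)
  have h12 : Tendsto (fun v => wSum12J p g (F v) n t m s) atTop (nhds (wSum12J p g f n t m s)) := by
    unfold wSum12J
    apply tendsto_finset_sum
    intro j hj
    apply tendsto_finset_sum
    intro i hi
    have hi' := mem_range.mp hi
    have hj' := mem_range.mp hj
    have m1 := partition_mem hnt hi'
    have m0 := partition_mem hnt hi'.le
    have n1 := partition_mem hms hj'
    have n0 := partition_mem hms hj'.le
    exact ((wbv_tendsto_add hd (wbv_tendsto_add hd tendsto_const_nhds (hlim _ m1 _ n0))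
        (hlim _ m0 _ n1)).dist
      (wbv_tendsto_add hd (wbv_tendsto_add hd (wbv_tendsto_add hd (hlim _ m1 _ n1)
        (hlim _ m0 _ n0)) tendsto_const_nhds) tendsto_const_nhds)).rpow_const
      (Or.inr hp.le)
  exact ((tendsto_normW hp h1).add (tendsto_normW hp h2)).add (tendsto_normW hp h12)

end AuxTendsto

/-- For `p ∈ (0,∞)` and a complete metric semigroup `M`, the bivariate Wiener
bounded `p`-variation space `(WBV_p(I×I, M), ρ_p)` is a complete metric space:
`ρ_p` vanishes exactly on equal functions (on `I×I`), is symmetric, satisfies the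
triangle inequality, and every `ρ_p`-Cauchy sequence converges in the space. -/
theorem WBVp_complete_metric [CompleteSpace M] (p : ℝ) (hp : 0 < p)
    (hd : ∀ u v w : M, dist (u + w) (v + w) = dist u v) :
    (∀ f g : ℝ → ℝ → M, MemWBV p f → MemWBV p g →
      (rhoP p f g = 0 ↔ ∀ t ∈ Set.Icc (0:ℝ) 1, ∀ s ∈ Set.Icc (0:ℝ) 1, f t s = g t s))
    ∧ (∀ f g : ℝ → ℝ → M, MemWBV p f → MemWBV p g → rhoP p f g = rhoP p g f)
    ∧ (∀ f g h : ℝ → ℝ → M, MemWBV p f → MemWBV p g → MemWBV p h →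
        rhoP p f g ≤ rhoP p f h + rhoP p h g)
    ∧ (∀ F : ℕ → ℝ → ℝ → M, (∀ u, MemWBV p (F u)) →
        (∀ ε > (0:ℝ), ∃ N, ∀ u ≥ N, ∀ v ≥ N, rhoP p (F u) (F v) < ε) →
        ∃ f : ℝ → ℝ → M, MemWBV p f ∧
          Filter.Tendsto (fun u => rhoP p (F u) f) Filter.atTop (nhds 0)) := by
  refine ⟨?_, ?_, ?_, ?_⟩
  · -- identity of indiscernibles
    intro f g hf hg
    have hB := bddAbove_wSetJ hd hp hf hg
    constructor
    · intro h0 a ha b hb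
      have h1 : (0:ℝ) ≤ dist (f 0 0) (g 0 0) := dist_nonneg
      have h2 := VpJ_nonneg hp hB
      have hD0 : dist (f 0 0) (g 0 0) = 0 := by unfold rhoP at h0; linarith
      have hV0 : VpJ p f g = 0 := by unfold rhoP at h0; linarith
      have key := dist_apply_le hd hp hB ha hb
      rw [hD0, hV0, phiW_zero hp] at key
      have : dist (f a b) (g a b) ≤ 0 := by linarith
      exact dist_le_zero.mp this
    · intro heq
      unfold rhoP
      have h00 : dist (f 0 0) (g 0 0) = 0 := by
        rw [heq 0 zero_mem_Icc01 0 zero_mem_Icc01]; exact dist_self _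
      have hub : ∀ x ∈ wSetJ p f g, x ≤ 0 := by
        rintro x ⟨n, t, m, s, hnt, hms, rfl⟩
        have e1 : wSum1J p f g n t = 0 := by
          unfold wSum1J
          apply Finset.sum_eq_zero
          intro i hi
          have hi' := mem_range.mp hi
          rw [heq _ (partition_mem hnt hi') 0 zero_mem_Icc01,
              heq _ (partition_mem hnt hi'.le) 0 zero_mem_Icc01,
              add_comm (g (t (i+1)) 0) (g (t i) 0), dist_self]
          exact Real.zero_rpow hp.ne'
        have e2 : wSum2J p f g m s = 0 := by
          unfold wSum2J
          apply Finset.sum_eq_zero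
          intro j hj
          have hj' := mem_range.mp hj
          rw [heq 0 zero_mem_Icc01 _ (partition_mem hms hj'),
              heq 0 zero_mem_Icc01 _ (partition_mem hms hj'.le),
              add_comm (g 0 (s (j+1))) (g 0 (s j)), dist_self]
          exact Real.zero_rpow hp.ne'
        have e12 : wSum12J p f g n t m s = 0 := by
          unfold wSum12J
          apply Finset.sum_eq_zero
          intro j hj
          apply Finset.sum_eq_zero
          intro i hi
          have hi' := mem_range.mp hi
          have hj' := mem_range.mp hj
          rw [heq _ (partition_mem hnt hi') _ (partition_mem hms hj'),
              heq _ (partition_mem hnt hi'.le) _ (partition_mem hms hj'.le),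
              heq _ (partition_mem hnt hi') _ (partition_mem hms hj'.le),
              heq _ (partition_mem hnt hi'.le) _ (partition_mem hms hj'),
              dist_self]
          exact Real.zero_rpow hp.ne'
        unfold VpPart
        rw [e1, e2, e12, normW_zero hp]
        norm_num
      have hV : VpJ p f g = 0 :=
        le_antisymm (Real.sSup_le hub le_rfl) (VpJ_nonneg hp hB)
      rw [h00, hV, add_zero]
  · -- symmetry
    intro f g hf hg
    unfold rhoP
    rw [dist_comm, VpJ_symm]
  · -- triangle inequality
    intro f g h hf hg hh
    have hBfh := bddAbove_wSetJ hd hp hf hh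
    have hBhg := bddAbove_wSetJ hd hp hh hg
    have hV : VpJ p f g ≤ VpJ p f h + VpJ p h g := by
      apply Real.sSup_le
      · rintro x ⟨n, t, m, s, hnt, hms, rfl⟩
        exact (VpPart_tri hd hp f g h n t m s).trans
          (add_le_add (le_csSup hBfh (VpPart_mem hnt hms)) (le_csSup hBhg (VpPart_mem hnt hms)))
      · exact add_nonneg (VpJ_nonneg hp hBfh) (VpJ_nonneg hp hBhg)
    have htri := dist_triangle (f 0 0) (h 0 0) (g 0 0)
    unfold rhoP
    linarith
  · -- completeness
    intro F hF hC
    have _inst : Nonempty M := ⟨F 0 0 0⟩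
    have hBJ : ∀ u v, BddAbove (wSetJ p (F u) (F v)) :=
      fun u v => bddAbove_wSetJ hd hp (hF u) (hF v)
    have hVle : ∀ u v, VpJ p (F u) (F v) ≤ rhoP p (F u) (F v) := by
      intro u v
      have : (0:ℝ) ≤ dist (F u 0 0) (F v 0 0) := dist_nonneg
      unfold rhoP; linarith
    have hDle : ∀ u v, dist (F u 0 0) (F v 0 0) ≤ rhoP p (F u) (F v) := by
      intro u v
      have := VpJ_nonneg hp (hBJ u v)
      unfold rhoP; linarith
    have hex : ∀ a ∈ Set.Icc (0:ℝ) 1, ∀ b ∈ Set.Icc (0:ℝ) 1,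
        ∃ L, Tendsto (fun u => F u a b) atTop (nhds L) := by
      intro a ha b hb
      apply cauchySeq_tendsto_of_complete
      rw [Metric.cauchySeq_iff]
      intro ε hε
      have hδ : 0 < min (ε/7) ((ε/7)^p) :=
        lt_min (by linarith) (Real.rpow_pos_of_pos (by linarith) p)
      obtain ⟨N, hN⟩ := hC _ hδ
      refine ⟨N, fun u hu v hv => ?_⟩
      have hρ := hN u hu v hv
      have hρ0 : 0 ≤ rhoP p (F u) (F v) := dist_nonneg.trans (hDle u v)
      have h1 := dist_apply_le hd hp (hBJ u v) ha hb
      have h2 : phiW p (VpJ p (F u) (F v)) ≤ phiW p (rhoP p (F u) (F v)) :=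
        phiW_mono hp (VpJ_nonneg hp (hBJ u v)) (hVle u v)
      have h3 := phiW_bound hp hρ0 hε hρ
      have h4 := hDle u v
      linarith
    set f : ℝ → ℝ → M := fun a b => limUnder atTop (fun u => F u a b) with hf_def
    have hlim : ∀ a ∈ Set.Icc (0:ℝ) 1, ∀ b ∈ Set.Icc (0:ℝ) 1,
        Tendsto (fun u => F u a b) atTop (nhds (f a b)) :=
      fun a ha b hb => tendsto_nhds_limUnder (hex a ha b hb)
    obtain ⟨N₁, hN₁⟩ := hC 1 one_pos
    have hkey1 : ∀ v, N₁ ≤ v → VpJ p (F v) (F N₁) ≤ 1 :=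
      fun v hv => (hVle v N₁).trans (hN₁ v hv N₁ le_rfl).le
    have hmem : MemWBV p f := by
      refine ⟨⟨1 + sSup (wSet1 p (F N₁)), ?_⟩, ⟨1 + sSup (wSet2 p (F N₁)), ?_⟩,
        ⟨1 + sSup (wSet12 p (F N₁)), ?_⟩⟩
      · rintro x ⟨n, t, hnt, rfl⟩
        apply le_of_tendsto (tendsto_normW hp (tendsto_wSum1W hp hlim hnt))
        filter_upwards [eventually_ge_atTop N₁] with v hv
        have key : normW p (wSum1 p (F v) n t) ≤
            normW p (wSum1J p (F v) (F N₁) n t) + normW p (wSum1 p (F N₁) n t) := by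
          unfold wSum1 wSum1J
          exact normW_add_le hp _ _ _ _ (fun i _ => dist_nonneg) (fun i _ => dist_nonneg)
            (fun i _ => dist_nonneg) (fun i _ => wbv_singleLe1 hd _ _ _ _)
        have h2 := (normW_wSum1J_le hp (hBJ v N₁) hnt).trans (hkey1 v hv)
        have h3 : normW p (wSum1 p (F N₁) n t) ≤ sSup (wSet1 p (F N₁)) :=
          le_csSup (hF N₁).1 ⟨n, t, hnt, rfl⟩
        linarith
      · rintro x ⟨m, s, hms, rfl⟩
        apply le_of_tendsto (tendsto_normW hp (tendsto_wSum2W hp hlim hms))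
        filter_upwards [eventually_ge_atTop N₁] with v hv
        have key : normW p (wSum2 p (F v) m s) ≤
            normW p (wSum2J p (F v) (F N₁) m s) + normW p (wSum2 p (F N₁) m s) := by
          unfold wSum2 wSum2J
          exact normW_add_le hp _ _ _ _ (fun i _ => dist_nonneg) (fun i _ => dist_nonneg)
            (fun i _ => dist_nonneg) (fun i _ => wbv_singleLe1 hd _ _ _ _)
        have h2 := (normW_wSum2J_le hp (hBJ v N₁) hms).trans (hkey1 v hv)
        have h3 : normW p (wSum2 p (F N₁) m s) ≤ sSup (wSet2 p (F N₁)) :=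
          le_csSup (hF N₁).2.1 ⟨m, s, hms, rfl⟩
        linarith
      · rintro x ⟨n, t, m, s, hnt, hms, rfl⟩
        apply le_of_tendsto (tendsto_normW hp (tendsto_wSum12W hd hp hlim hnt hms))
        filter_upwards [eventually_ge_atTop N₁] with v hv
        have key : normW p (wSum12 p (F v) n t m s) ≤
            normW p (wSum12J p (F v) (F N₁) n t m s) + normW p (wSum12 p (F N₁) n t m s) := by
          unfold wSum12 wSum12J
          exact normW_add_le_double hp _ _ _ _ _ (fun j i => dist_nonneg)
            (fun j i => dist_nonneg) (fun j i => dist_nonneg)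
            (fun j i => wbv_singleLe12 hd _ _ _ _ _ _ _ _)
        have h2 := (normW_wSum12J_le hp (hBJ v N₁) hnt hms).trans (hkey1 v hv)
        have h3 : normW p (wSum12 p (F N₁) n t m s) ≤ sSup (wSet12 p (F N₁)) :=
          le_csSup (hF N₁).2.2 ⟨n, t, m, s, hnt, hms, rfl⟩
        linarith
    refine ⟨f, hmem, ?_⟩
    have hconv : ∀ ε : ℝ, 0 < ε → ∃ N, ∀ u, N ≤ u →
        rhoP p (F u) f ≤ 2*ε ∧ 0 ≤ rhoP p (F u) f := by
      intro ε hε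
      obtain ⟨N, hN⟩ := hC ε hε
      refine ⟨N, fun u hu => ?_⟩
      have hub : ∀ x ∈ wSetJ p (F u) f, x ≤ ε := by
        rintro x ⟨n, t, m, s, hnt, hms, rfl⟩
        apply le_of_tendsto (tendsto_VpPartW hd hp hlim hnt hms (F u))
        filter_upwards [eventually_ge_atTop N] with v hv
        exact (le_csSup (hBJ u v) (VpPart_mem hnt hms)).trans
          ((hVle u v).trans (hN u hu v hv).le)
      have hVJf : VpJ p (F u) f ≤ ε := Real.sSup_le hub hε.le
      have hVJ0 : 0 ≤ VpJ p (F u) f := VpJ_nonneg hp ⟨ε, hub⟩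
      have hdistf : dist (F u 0 0) (f 0 0) ≤ ε := by
        apply le_of_tendsto (tendsto_const_nhds.dist (hlim 0 zero_mem_Icc01 0 zero_mem_Icc01))
        filter_upwards [eventually_ge_atTop N] with v hv
        exact (hDle u v).trans (hN u hu v hv).le
      have hdist0 : (0:ℝ) ≤ dist (F u 0 0) (f 0 0) := dist_nonneg
      constructor
      · unfold rhoP; linarith
      · unfold rhoP; linarith
    rw [Metric.tendsto_atTop]
    intro ε hε
    obtain ⟨N, hN⟩ := hconv (ε/3) (by linarith)
    refine ⟨N, fun u hu => ?_⟩
    obtain ⟨h1, h2⟩ := hN u hu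
    rw [Real.dist_eq, sub_zero, abs_of_nonneg h2]
    linarith
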